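/- Let f: {0,1}^d → [0,1] be monotone with I(f) ≤ K for some K ≥ 1, fix ε ∈ (0, 1/2], let γ > 2 log 3, set d_0 := ⌈K/(2ε)⌉ and δ := e^{-γ d_0}, and suppose K/(4 d_0) ≤ ε/2 and (K/12)(3 e^{-γ/2})^{d_0} ≤ ε/2. Then the function g := ∑_{S ⊆ J, |S| ≤ d_0} f̂(S) χ_S, where J := {i : I_i(f) ≥ δ}, satisfies ‖f - g‖_2² ≤ ε and g depends only on the coordinates in J, with |J| ≤ K e^{γ d_0}. -/

import Mathlib

open Finset

/-- Expectation of `g` under the uniform measure on `{0,1}^d`. -/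
noncomputable def unifE (d : ℕ) (g : (Fin d → Bool) → ℝ) : ℝ :=
  (∑ x : Fin d → Bool, g x) / 2 ^ d

/-- Discrete derivative `Δ_i f (x) = f(x^{i→1}) - f(x^{i→0})`. -/
def disc (d : ℕ) (f : (Fin d → Bool) → ℝ) (i : Fin d) (x : Fin d → Bool) : ℝ :=
  f (Function.update x i true) - f (Function.update x i false)

/-- Coordinatewise monotone on the hypercube. -/
def BMono (d : ℕ) (f : (Fin d → Bool) → ℝ) : Prop :=
  ∀ x y : Fin d → Bool, (∀ i, x i ≤ y i) → f x ≤ f y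

/-- Fourier character `χ_S(x) = ∏_{i∈S} (2 x_i - 1)`. -/
def chi (d : ℕ) (S : Finset (Fin d)) (x : Fin d → Bool) : ℝ :=
  ∏ i ∈ S, (if x i then (1 : ℝ) else -1)

/-- Fourier coefficient `f̂(S) = E[f(X) χ_S(X)]`. -/
noncomputable def fhat (d : ℕ) (f : (Fin d → Bool) → ℝ) (S : Finset (Fin d)) : ℝ :=
  unifE d (fun x => f x * chi d S x)


open scoped symmDiff
section
variable {d : ℕ}

lemma card_cube : Fintype.card (Fin d → Bool) = 2 ^ d := by simp

lemma unifE_const (c : ℝ) : unifE d (fun _ => c) = c := by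
  unfold unifE
  rw [Finset.sum_const, card_univ, card_cube, nsmul_eq_mul]
  field_simp
  push_cast; ring

lemma unifE_mono {u v : (Fin d → Bool) → ℝ} (h : ∀ x, u x ≤ v x) :
    unifE d u ≤ unifE d v := by
  unfold unifE
  apply div_le_div_of_nonneg_right ?_ (by positivity)
  exact Finset.sum_le_sum fun x _ => h x

lemma unifE_nonneg {u : (Fin d → Bool) → ℝ} (h : ∀ x, 0 ≤ u x) : 0 ≤ unifE d u := by
  unfold unifE
  exact div_nonneg (Finset.sum_nonneg fun x _ => h x) (by positivity)

lemma unifE_sum {ι : Type*} (s : Finset ι) (F : ι → (Fin d → Bool) → ℝ) :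
    unifE d (fun x => ∑ j ∈ s, F j x) = ∑ j ∈ s, unifE d (F j) := by
  unfold unifE
  rw [Finset.sum_comm, Finset.sum_div]

lemma unifE_const_mul (c : ℝ) (u : (Fin d → Bool) → ℝ) :
    unifE d (fun x => c * u x) = c * unifE d u := by
  unfold unifE
  rw [← Finset.mul_sum, mul_div_assoc]

lemma unifE_sub (u v : (Fin d → Bool) → ℝ) :
    unifE d (fun x => u x - v x) = unifE d u - unifE d v := by
  unfold unifE
  rw [Finset.sum_sub_distrib, sub_div]

lemma unifE_CS (u v : (Fin d → Bool) → ℝ) :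
    (unifE d (fun x => u x * v x)) ^ 2 ≤
      unifE d (fun x => u x ^ 2) * unifE d (fun x => v x ^ 2) := by
  unfold unifE
  rw [div_pow, div_mul_div_comm, ← pow_mul, ← pow_add]
  have h := Finset.sum_mul_sq_le_sq_mul_sq Finset.univ u v
  have h2 : (d * 2) = d + d := by ring
  rw [h2]
  apply div_le_div_of_nonneg_right ?_ (by positivity)
  simpa using h
end
section
variable {d : ℕ}

lemma chi_apply_sq (i : Fin d) (x : Fin d → Bool) :
    (if x i then (1:ℝ) else -1) * (if x i then (1:ℝ) else -1) = 1 := by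
  by_cases h : x i <;> simp [h]

lemma chi_mul (S T : Finset (Fin d)) (x : Fin d → Bool) :
    chi d S x * chi d T x = chi d (S ∆ T) x := by
  classical
  unfold chi
  have hS : (∏ i ∈ S, (if x i then (1:ℝ) else -1)) =
      (∏ i ∈ S \ T, (if x i then (1:ℝ) else -1)) * ∏ i ∈ S ∩ T, (if x i then (1:ℝ) else -1) := by
    rw [← Finset.prod_union (Finset.disjoint_sdiff_inter S T), Finset.sdiff_union_inter]
  have hT : (∏ i ∈ T, (if x i then (1:ℝ) else -1)) =
      (∏ i ∈ T \ S, (if x i then (1:ℝ) else -1)) * ∏ i ∈ S ∩ T, (if x i then (1:ℝ) else -1) := by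
    rw [Finset.inter_comm S T,
      ← Finset.prod_union (Finset.disjoint_sdiff_inter T S), Finset.sdiff_union_inter]
  have hsq : (∏ i ∈ S ∩ T, (if x i then (1:ℝ) else -1)) *
      (∏ i ∈ S ∩ T, (if x i then (1:ℝ) else -1)) = 1 := by
    rw [← Finset.prod_mul_distrib]
    exact Finset.prod_eq_one fun i _ => chi_apply_sq i x
  have hsd : S ∆ T = (S \ T) ∪ (T \ S) := by
    ext j; simp [Finset.mem_symmDiff, Finset.mem_union]
  rw [hS, hT, hsd, Finset.prod_union disjoint_sdiff_sdiff]
  set A := ∏ i ∈ S \ T, (if x i then (1:ℝ) else -1) with hA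
  set B := ∏ i ∈ T \ S, (if x i then (1:ℝ) else -1) with hB
  set C := ∏ i ∈ S ∩ T, (if x i then (1:ℝ) else -1) with hC
  linear_combination (A * B) * hsq

lemma chi_update_not_mem {S : Finset (Fin d)} {i : Fin d} (h : i ∉ S) (x : Fin d → Bool) (b : Bool) :
    chi d S (Function.update x i b) = chi d S x := by
  unfold chi
  refine Finset.prod_congr rfl fun j hj => ?_
  rw [Function.update_of_ne (by rintro rfl; exact h hj) b x]

lemma chi_update_mem {S : Finset (Fin d)} {i : Fin d} (h : i ∈ S) (x : Fin d → Bool) (b : Bool) :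
    chi d S (Function.update x i b) =
      (if b then (1:ℝ) else -1) * chi d (S.erase i) x := by
  unfold chi
  rw [← Finset.mul_prod_erase _ _ h, Function.update_self]
  congr 1
  refine Finset.prod_congr rfl fun j hj => ?_
  rw [Function.update_of_ne (Finset.ne_of_mem_erase hj) b x]

lemma sum_chi_empty : (∑ x : Fin d → Bool, chi d (∅ : Finset (Fin d)) x) = 2 ^ d := by
  simp [chi]

lemma sum_chi_ne {S : Finset (Fin d)} (hS : S ≠ ∅) :
    (∑ x : Fin d → Bool, chi d S x) = 0 := by
  classical
  obtain ⟨i, hi⟩ := Finset.nonempty_iff_ne_empty.mpr hS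
  set σ : (Fin d → Bool) → (Fin d → Bool) := fun x => Function.update x i (!x i) with hσ
  have hinv : Function.Involutive σ := by
    intro x
    simp [hσ, Function.update_idem, Function.update_self]
  have h1 : (∑ x : Fin d → Bool, chi d S (σ x)) = ∑ x : Fin d → Bool, chi d S x :=
    Fintype.sum_bijective σ hinv.bijective _ _ (fun x => rfl)
  have hx : ∀ x : Fin d → Bool, chi d S x = (if x i then (1:ℝ) else -1) * chi d (S.erase i) x := by
    intro x
    unfold chi
    exact (Finset.mul_prod_erase _ _ hi).symm
  have h2 : ∀ x, chi d S (σ x) = - chi d S x := by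
    intro x
    rw [hσ, chi_update_mem hi, hx x]
    by_cases h : x i <;> simp [h]
  rw [Finset.sum_congr rfl fun x _ => h2 x] at h1
  simp only [Finset.sum_neg_distrib] at h1
  linarith

lemma unifE_chi (S : Finset (Fin d)) :
    unifE d (chi d S) = if S = ∅ then 1 else 0 := by
  unfold unifE
  by_cases h : S = ∅
  · simp [h, sum_chi_empty]
  · simp [h, sum_chi_ne h]

lemma unifE_chi_mul (S T : Finset (Fin d)) :
    unifE d (fun x => chi d S x * chi d T x) = if S = T then 1 else 0 := by
  classical
  have : (fun x => chi d S x * chi d T x) = chi d (S ∆ T) := by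
    funext x; exact chi_mul S T x
  rw [this, unifE_chi]
  by_cases h : S = T
  · simp [h, symmDiff_self, Finset.bot_eq_empty]
  · have h' : ¬ (S ∆ T = ∅) := fun he => h (symmDiff_eq_bot.mp (Finset.bot_eq_empty ▸ he))
    simp [h, h']

end
section
variable {d : ℕ}

lemma sum_chi_mul_chi (x y : Fin d → Bool) :
    (∑ S : Finset (Fin d), chi d S x * chi d S y) = if x = y then (2:ℝ) ^ d else 0 := by
  classical
  have key : (∑ S : Finset (Fin d), chi d S x * chi d S y) =
      ∏ i : Fin d, ((if x i then (1:ℝ) else -1) * (if y i then (1:ℝ) else -1) + 1) := by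
    rw [Fintype.prod_add]
    refine (Finset.sum_congr rfl fun S _ => ?_).symm
    simp only [Finset.prod_const_one, mul_one]
    unfold chi
    rw [← Finset.prod_mul_distrib]
  rw [key]
  by_cases h : x = y
  · subst h
    simp only [if_pos rfl]
    rw [Finset.prod_congr rfl fun i _ => by rw [chi_apply_sq i x]]
    norm_num
  · obtain ⟨i, hi⟩ : ∃ i, x i ≠ y i := by
      by_contra hc
      push_neg at hc
      exact h (funext hc)
    rw [if_neg h]
    apply Finset.prod_eq_zero (Finset.mem_univ i)
    rcases Bool.eq_false_or_eq_true (x i) with hx | hx <;>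
      rcases Bool.eq_false_or_eq_true (y i) with hy | hy <;>
      simp [hx, hy] at hi ⊢

lemma expansion (f : (Fin d → Bool) → ℝ) (x : Fin d → Bool) :
    (∑ S : Finset (Fin d), fhat d f S * chi d S x) = f x := by
  classical
  unfold fhat unifE
  have step1 : (∑ S : Finset (Fin d), (∑ y : Fin d → Bool, f y * chi d S y) / 2 ^ d * chi d S x)
      = ∑ S : Finset (Fin d), ∑ y : Fin d → Bool, f y * chi d S y * chi d S x / 2 ^ d := by
    refine Finset.sum_congr rfl fun S _ => ?_
    rw [div_mul_eq_mul_div, Finset.sum_mul, Finset.sum_div]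
  rw [step1, Finset.sum_comm]
  have step2 : ∀ y : Fin d → Bool,
      (∑ S : Finset (Fin d), f y * chi d S y * chi d S x / 2 ^ d)
      = f y * (if y = x then (2:ℝ) ^ d else 0) / 2 ^ d := by
    intro y
    rw [← sum_chi_mul_chi y x, Finset.mul_sum, Finset.sum_div]
    refine Finset.sum_congr rfl fun S _ => ?_
    ring
  rw [Finset.sum_congr rfl fun y _ => step2 y]
  rw [Finset.sum_congr rfl (g := fun y => if y = x then f y * 2 ^ d / 2 ^ d else 0)
    (fun y _ => by by_cases h : y = x <;> simp [h])]
  rw [Finset.sum_ite_eq' Finset.univ x (fun y => f y * 2 ^ d / 2 ^ d)]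
  simp only [Finset.mem_univ, if_pos]
  field_simp

lemma parseval (u v : (Fin d → Bool) → ℝ) :
    unifE d (fun x => u x * v x) = ∑ S : Finset (Fin d), fhat d u S * fhat d v S := by
  classical
  have : ∀ S, fhat d u S * fhat d v S = fhat d v S * fhat d u S := fun S => mul_comm _ _
  rw [Finset.sum_congr rfl fun S _ => this S]
  unfold fhat unifE
  simp only
  refine Eq.symm ?_
  have : ∀ S : Finset (Fin d),
      (∑ x : Fin d → Bool, v x * chi d S x) / 2 ^ d * ((∑ x : Fin d → Bool, u x * chi d S x))
      = ∑ x : Fin d → Bool, u x * ((∑ y : Fin d → Bool, v y * chi d S y) / 2 ^ d * chi d S x) := by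
    intro S
    rw [Finset.mul_sum]
    refine Finset.sum_congr rfl fun x _ => ?_
    ring
  calc ∑ S : Finset (Fin d), (∑ x : Fin d → Bool, v x * chi d S x) / 2 ^ d
        * ((∑ x : Fin d → Bool, u x * chi d S x) / 2 ^ d)
      = ∑ S : Finset (Fin d), ((∑ x : Fin d → Bool, v x * chi d S x) / 2 ^ d
        * (∑ x : Fin d → Bool, u x * chi d S x)) / 2 ^ d := by
        refine Finset.sum_congr rfl fun S _ => ?_; ring
    _ = (∑ S : Finset (Fin d), ∑ x : Fin d → Bool,
          u x * ((∑ y : Fin d → Bool, v y * chi d S y) / 2 ^ d * chi d S x)) / 2 ^ d := by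
        rw [← Finset.sum_div]
        congr 1
        exact Finset.sum_congr rfl fun S _ => this S
    _ = (∑ x : Fin d → Bool, u x * v x) / 2 ^ d := by
        congr 1
        rw [Finset.sum_comm]
        refine Finset.sum_congr rfl fun x _ => ?_
        rw [← Finset.mul_sum]
        congr 1
        exact expansion v x

end
section
variable {d : ℕ}

lemma fhat_sub (f g : (Fin d → Bool) → ℝ) (S : Finset (Fin d)) :
    fhat d (fun x => f x - g x) S = fhat d f S - fhat d g S := by
  unfold fhat
  rw [← unifE_sub]
  congr 1
  funext x
  ring

lemma fhat_comb (s : Finset (Finset (Fin d))) (c : Finset (Fin d) → ℝ) (S : Finset (Fin d)) :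
    fhat d (fun x => ∑ T ∈ s, c T * chi d T x) S = if S ∈ s then c S else 0 := by
  classical
  unfold fhat
  have : (fun x => (∑ T ∈ s, c T * chi d T x) * chi d S x)
      = fun x => ∑ T ∈ s, c T * (chi d T x * chi d S x) := by
    funext x
    rw [Finset.sum_mul]
    exact Finset.sum_congr rfl fun T _ => by ring
  rw [this, unifE_sum]
  have : ∀ T ∈ s, unifE d (fun x => c T * (chi d T x * chi d S x))
      = if T = S then c T else 0 := by
    intro T _
    rw [unifE_const_mul, unifE_chi_mul]
    by_cases h : T = S <;> simp [h]
  rw [Finset.sum_congr rfl this, Finset.sum_ite_eq' s S (fun T => c T)]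

lemma disc_eq (f : (Fin d → Bool) → ℝ) (i : Fin d) (x : Fin d → Bool) :
    disc d f i x = ∑ S : Finset (Fin d),
      (if i ∈ S then 2 * fhat d f S * chi d (S.erase i) x else 0) := by
  classical
  unfold disc
  rw [← expansion f (Function.update x i true), ← expansion f (Function.update x i false),
    ← Finset.sum_sub_distrib]
  refine Finset.sum_congr rfl fun S _ => ?_
  by_cases h : i ∈ S
  · rw [chi_update_mem h, chi_update_mem h, if_pos h]
    norm_num
    ring
  · rw [chi_update_not_mem h, chi_update_not_mem h, if_neg h]
    ring

lemma fhat_disc (f : (Fin d → Bool) → ℝ) (i : Fin d) (T : Finset (Fin d)) :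
    fhat d (disc d f i) T = if i ∈ T then 0 else 2 * fhat d f (insert i T) := by
  classical
  set F := fhat d f with hF
  have hfun : disc d f i = fun x => ∑ S : Finset (Fin d),
      (if i ∈ S then 2 * F S else 0) * chi d (S.erase i) x := by
    funext x
    rw [disc_eq f i x]
    refine Finset.sum_congr rfl fun S _ => ?_
    by_cases h : i ∈ S <;> simp [h, hF]
  rw [hfun]
  unfold fhat
  have : (fun x => (∑ S : Finset (Fin d),
      (if i ∈ S then 2 * F S else 0) * chi d (S.erase i) x) * chi d T x)
      = fun x => ∑ S : Finset (Fin d),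
      (if i ∈ S then 2 * F S else 0) * (chi d (S.erase i) x * chi d T x) := by
    funext x
    rw [Finset.sum_mul]
    exact Finset.sum_congr rfl fun S _ => by ring
  rw [this, unifE_sum]
  have heval : ∀ S, unifE d (fun x => (if i ∈ S then 2 * F S else 0)
      * (chi d (S.erase i) x * chi d T x))
      = (if i ∈ S then 2 * F S else 0) * (if S.erase i = T then 1 else 0) := by
    intro S
    rw [unifE_const_mul, unifE_chi_mul]
  rw [Finset.sum_congr rfl fun S _ => heval S]
  by_cases hiT : i ∈ T
  · rw [if_pos hiT]
    refine Finset.sum_eq_zero fun S _ => ?_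
    by_cases h : i ∈ S
    · have : S.erase i ≠ T := fun he => (he ▸ Finset.notMem_erase i S) hiT
      simp [h, this]
    · simp [h]
  · rw [if_neg hiT]
    rw [Finset.sum_eq_single (insert i T)]
    · rw [if_pos (Finset.mem_insert_self i T), if_pos (Finset.erase_insert hiT)]
      simp
    · intro S _ hne
      by_cases h : i ∈ S
      · have : S.erase i ≠ T := by
          intro he
          exact hne (by rw [← he, Finset.insert_erase h])
        simp [h, this]
      · simp [h]
    · intro h
      exact absurd (Finset.mem_univ _) h

lemma parseval_sq (u : (Fin d → Bool) → ℝ) :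
    unifE d (fun x => u x ^ 2) = ∑ S : Finset (Fin d), (fhat d u S) ^ 2 := by
  have h := parseval u u
  have h2 : (fun x => u x ^ 2) = fun x => u x * u x := by funext x; ring
  rw [h2, h]
  exact Finset.sum_congr rfl fun S _ => by ring

lemma sum_fhat_disc_sq (f : (Fin d → Bool) → ℝ) (i : Fin d) :
    (∑ T : Finset (Fin d), (fhat d (disc d f i) T) ^ 2)
      = 4 * ∑ S ∈ Finset.univ.filter (fun S : Finset (Fin d) => i ∈ S), (fhat d f S) ^ 2 := by
  classical
  rw [Finset.sum_congr rfl fun T (_ : T ∈ univ) => by rw [fhat_disc f i T]]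
  rw [← Finset.sum_filter_add_sum_filter_not Finset.univ (fun T => i ∈ T)]
  have hz : (∑ T ∈ Finset.univ.filter (fun T : Finset (Fin d) => i ∈ T),
      (if i ∈ T then (0:ℝ) else 2 * fhat d f (insert i T)) ^ 2) = 0 := by
    refine Finset.sum_eq_zero fun T hT => ?_
    rw [if_pos (Finset.mem_filter.mp hT).2]
    ring
  rw [hz, zero_add]
  rw [Finset.mul_sum]
  refine Finset.sum_nbij' (i := fun T => insert i T) (j := fun S => S.erase i)
    ?_ ?_ ?_ ?_ ?_
  · intro T hT
    simp only [Finset.mem_filter, Finset.mem_univ, true_and] at *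
    exact Finset.mem_insert_self i T
  · intro S hS
    simp only [Finset.mem_filter, Finset.mem_univ, true_and] at *
    exact Finset.notMem_erase i S
  · intro T hT
    simp only [Finset.mem_filter, Finset.mem_univ, true_and] at hT
    exact Finset.erase_insert hT
  · intro S hS
    simp only [Finset.mem_filter, Finset.mem_univ, true_and] at hS
    exact Finset.insert_erase hS
  · intro T hT
    simp only [Finset.mem_filter, Finset.mem_univ, true_and] at hT
    rw [if_neg hT]
    ring

lemma degree_identity (f : (Fin d → Bool) → ℝ) :
    (∑ S : Finset (Fin d), (S.card : ℝ) * (fhat d f S) ^ 2)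
      = (1/4) * ∑ i : Fin d, unifE d (fun x => (disc d f i x) ^ 2) := by
  classical
  have h1 : ∀ i : Fin d, unifE d (fun x => (disc d f i x) ^ 2)
      = 4 * ∑ S ∈ Finset.univ.filter (fun S : Finset (Fin d) => i ∈ S), (fhat d f S) ^ 2 := by
    intro i
    rw [parseval_sq (disc d f i), sum_fhat_disc_sq]
  rw [Finset.sum_congr rfl fun i _ => h1 i, ← Finset.mul_sum]
  rw [← mul_assoc]
  norm_num
  have h2 : ∀ i : Fin d, (∑ S ∈ Finset.univ.filter (fun S : Finset (Fin d) => i ∈ S),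
      (fhat d f S) ^ 2) = ∑ S : Finset (Fin d), (if i ∈ S then (fhat d f S)^2 else 0) := by
    intro i
    rw [Finset.sum_filter]
  rw [Finset.sum_congr rfl fun i _ => h2 i, Finset.sum_comm]
  refine Finset.sum_congr rfl fun S _ => ?_
  rw [Finset.sum_ite_mem, Finset.univ_inter, Finset.sum_const, nsmul_eq_mul]

end
section
variable {d : ℕ}

lemma unifE_add (u v : (Fin d → Bool) → ℝ) :
    unifE d (fun x => u x + v x) = unifE d u + unifE d v := by
  unfold unifE
  rw [Finset.sum_add_distrib, add_div]

set_option maxHeartbeats 2000000 in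
lemma hyper24 (ρ : ℝ) (hρ0 : 0 ≤ ρ) (hρ : ρ ^ 2 ≤ 1/3) (A : Finset (Fin d))
    (a : Finset (Fin d) → ℝ) :
    unifE d (fun x => (∑ T ∈ A.powerset, ρ ^ T.card * a T * chi d T x) ^ 4)
      ≤ (∑ T ∈ A.powerset, (a T) ^ 2) ^ 2 := by
  classical
  induction A using Finset.induction_on generalizing a with
  | empty =>
    simp only [Finset.powerset_empty, Finset.sum_singleton, Finset.card_empty, pow_zero, one_mul]
    have : (fun x => (a ∅ * chi d ∅ x) ^ 4) = fun _ => (a ∅) ^ 4 := by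
      funext x
      simp [chi]
    rw [this, unifE_const]
    norm_num [pow_mul]
    nlinarith [sq_nonneg (a ∅)]
  | @insert i A hiA ih =>
    -- split the sum
    set P : (Fin d → Bool) → ℝ := fun x => ∑ T ∈ A.powerset, ρ ^ T.card * a T * chi d T x with hP
    set Q : (Fin d → Bool) → ℝ :=
      fun x => ∑ T ∈ A.powerset, ρ ^ T.card * a (insert i T) * chi d T x with hQ
    have hinj : ∀ T ∈ A.powerset, ∀ T' ∈ A.powerset, insert i T = insert i T' → T = T' := by
      intro T hT T' hT' h
      have hiT : i ∉ T := fun hm => hiA (Finset.mem_powerset.mp hT hm)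
      have hiT' : i ∉ T' := fun hm => hiA (Finset.mem_powerset.mp hT' hm)
      rw [← Finset.erase_insert hiT, ← Finset.erase_insert hiT', h]
    have hsplit : ∀ (F : Finset (Fin d) → ℝ),
        (∑ T ∈ (insert i A).powerset, F T)
          = (∑ T ∈ A.powerset, F T) + ∑ T ∈ A.powerset, F (insert i T) := by
      intro F
      rw [Finset.powerset_insert, Finset.sum_union, Finset.sum_image hinj]
      · rw [Finset.disjoint_left]
        intro T hT hT2
        obtain ⟨T', hT', rfl⟩ := Finset.mem_image.mp hT2
        exact hiA (Finset.mem_powerset.mp hT (Finset.mem_insert_self i T'))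
    have hdecomp : ∀ x, (∑ T ∈ (insert i A).powerset, ρ ^ T.card * a T * chi d T x)
        = P x + ρ * (if x i then (1:ℝ) else -1) * Q x := by
      intro x
      rw [hsplit]
      congr 1
      rw [hQ]
      simp only
      rw [Finset.mul_sum]
      refine Finset.sum_congr rfl fun T hT => ?_
      have hiT : i ∉ T := fun hm => hiA (Finset.mem_powerset.mp hT hm)
      rw [Finset.card_insert_of_notMem hiT]
      unfold chi
      rw [Finset.prod_insert hiT]
      ring
    -- invariance under flipping coordinate i
    set σ : (Fin d → Bool) → (Fin d → Bool) := fun x => Function.update x i (!x i) with hσ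
    have hinv : Function.Involutive σ := by
      intro x
      simp [hσ, Function.update_idem, Function.update_self]
    have hPinv : ∀ x, P (σ x) = P x := by
      intro x
      refine Finset.sum_congr rfl fun T hT => ?_
      have hiT : i ∉ T := fun hm => hiA (Finset.mem_powerset.mp hT hm)
      rw [hσ]
      simp only
      rw [chi_update_not_mem hiT]
    have hQinv : ∀ x, Q (σ x) = Q x := by
      intro x
      refine Finset.sum_congr rfl fun T hT => ?_
      have hiT : i ∉ T := fun hm => hiA (Finset.mem_powerset.mp hT hm)
      rw [hσ]
      simp only
      rw [chi_update_not_mem hiT]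
    have hεinv : ∀ x, (if σ x i then (1:ℝ) else -1) = -(if x i then (1:ℝ) else -1) := by
      intro x
      rw [hσ]
      simp only [Function.update_self]
      by_cases h : x i <;> simp [h]
    -- averaging over the flip
    have havg : (∑ x : Fin d → Bool, (P x + ρ * (if x i then (1:ℝ) else -1) * Q x) ^ 4)
        = ∑ x : Fin d → Bool,
          (P x ^ 4 + 6 * ρ^2 * P x ^ 2 * Q x ^ 2 + ρ^4 * Q x ^ 4) := by
      have hb : (∑ x : Fin d → Bool, (P (σ x) + ρ * (if σ x i then (1:ℝ) else -1) * Q (σ x)) ^ 4)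
          = ∑ x : Fin d → Bool, (P x + ρ * (if x i then (1:ℝ) else -1) * Q x) ^ 4 :=
        Fintype.sum_bijective σ hinv.bijective _ _ (fun x => rfl)
      have hb2 : (∑ x : Fin d → Bool, (P (σ x) + ρ * (if σ x i then (1:ℝ) else -1) * Q (σ x)) ^ 4)
          = ∑ x : Fin d → Bool, (P x - ρ * (if x i then (1:ℝ) else -1) * Q x) ^ 4 := by
        refine Finset.sum_congr rfl fun x _ => ?_
        rw [hPinv, hQinv, hεinv]
        ring
      have hsq : ∀ x : Fin d → Bool, (if x i then (1:ℝ) else -1) ^ 2 = 1 := by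
        intro x
        by_cases h : x i <;> simp [h]
      have key : ∀ x : Fin d → Bool,
          (P x + ρ * (if x i then (1:ℝ) else -1) * Q x) ^ 4
            + (P x - ρ * (if x i then (1:ℝ) else -1) * Q x) ^ 4
          = 2 * (P x ^ 4 + 6 * ρ^2 * P x ^ 2 * Q x ^ 2 + ρ^4 * Q x ^ 4) := by
        intro x
        have h := hsq x
        set e := (if x i then (1:ℝ) else -1)
        linear_combination (12 * P x ^ 2 * ρ ^ 2 * Q x ^ 2 + 2 * ρ ^ 4 * Q x ^ 4 * (e ^ 2 + 1)) * h
      have : (2:ℝ) * ∑ x : Fin d → Bool, (P x + ρ * (if x i then (1:ℝ) else -1) * Q x) ^ 4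
          = 2 * ∑ x : Fin d → Bool,
            (P x ^ 4 + 6 * ρ^2 * P x ^ 2 * Q x ^ 2 + ρ^4 * Q x ^ 4) := by
        rw [Finset.mul_sum, Finset.mul_sum]
        calc ∑ x : Fin d → Bool, 2 * (P x + ρ * (if x i then (1:ℝ) else -1) * Q x) ^ 4
            = ∑ x : Fin d → Bool, ((P x + ρ * (if x i then (1:ℝ) else -1) * Q x) ^ 4
              + (P x - ρ * (if x i then (1:ℝ) else -1) * Q x) ^ 4) := by
              rw [Finset.sum_add_distrib, ← hb2, hb, ← Finset.mul_sum, two_mul]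
          _ = ∑ x : Fin d → Bool, 2 * (P x ^ 4 + 6 * ρ^2 * P x ^ 2 * Q x ^ 2 + ρ^4 * Q x ^ 4) :=
              Finset.sum_congr rfl fun x _ => key x
      linarith
    -- main chain
    have hrw : (fun x => (∑ T ∈ (insert i A).powerset, ρ ^ T.card * a T * chi d T x) ^ 4)
        = fun x => (P x + ρ * (if x i then (1:ℝ) else -1) * Q x) ^ 4 := by
      funext x
      rw [hdecomp]
    rw [hrw]
    have hE : unifE d (fun x => (P x + ρ * (if x i then (1:ℝ) else -1) * Q x) ^ 4)
        = unifE d (fun x => P x ^ 4) + 6 * ρ^2 * unifE d (fun x => P x ^ 2 * Q x ^ 2)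
          + ρ^4 * unifE d (fun x => Q x ^ 4) := by
      have e1 : unifE d (fun x => (P x + ρ * (if x i then (1:ℝ) else -1) * Q x) ^ 4)
          = unifE d (fun x => P x ^ 4 + 6 * ρ^2 * P x ^ 2 * Q x ^ 2 + ρ^4 * Q x ^ 4) := by
        unfold unifE
        rw [havg]
      rw [e1]
      rw [show (fun x => P x ^ 4 + 6 * ρ^2 * P x ^ 2 * Q x ^ 2 + ρ^4 * Q x ^ 4)
          = fun x => (P x ^ 4 + 6 * ρ^2 * (P x ^ 2 * Q x ^ 2)) + ρ^4 * Q x ^ 4 from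
        funext fun x => by ring]
      rw [unifE_add, unifE_add, unifE_const_mul, unifE_const_mul]
    rw [hE]
    set E := unifE d (fun x => P x ^ 2 * Q x ^ 2) with hEdef
    set t1 := unifE d (fun x => P x ^ 4) with ht1
    set t2 := unifE d (fun x => Q x ^ 4) with ht2
    have ht1n : 0 ≤ t1 := unifE_nonneg fun x => by positivity
    have ht2n : 0 ≤ t2 := unifE_nonneg fun x => by positivity
    set SA := ∑ T ∈ A.powerset, (a T) ^ 2 with hSA
    set SB := ∑ T ∈ A.powerset, (a (insert i T)) ^ 2 with hSB
    have hSAn : 0 ≤ SA := Finset.sum_nonneg fun T _ => sq_nonneg _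
    have hSBn : 0 ≤ SB := Finset.sum_nonneg fun T _ => sq_nonneg _
    have hIH1 : t1 ≤ SA ^ 2 := ih a
    have hIH2 : t2 ≤ SB ^ 2 := ih (fun T => a (insert i T))
    have hCS : E ≤ Real.sqrt t1 * Real.sqrt t2 := by
      rw [hEdef]
      have h := unifE_CS (fun x => P x ^ 2) (fun x => Q x ^ 2)
      have h2 : (fun x => (P x ^ 2) ^ 2) = fun x => P x ^ 4 := funext fun x => by ring
      have h3 : (fun x => (Q x ^ 2) ^ 2) = fun x => Q x ^ 4 := funext fun x => by ring
      rw [h2, h3, ← ht1, ← ht2] at h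
      have hnn : 0 ≤ unifE d (fun x => P x ^ 2 * Q x ^ 2) :=
        unifE_nonneg fun x => by positivity
      calc unifE d (fun x => P x ^ 2 * Q x ^ 2)
          ≤ Real.sqrt (t1 * t2) := by
            nlinarith [Real.sq_sqrt (mul_nonneg ht1n ht2n),
              Real.sqrt_nonneg (t1 * t2)]
        _ = Real.sqrt t1 * Real.sqrt t2 := Real.sqrt_mul ht1n t2
    have hs1 : Real.sqrt t1 ≤ SA := by
      calc Real.sqrt t1 ≤ Real.sqrt (SA ^ 2) := Real.sqrt_le_sqrt hIH1
        _ = SA := Real.sqrt_sq hSAn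
    have hs2 : Real.sqrt t2 ≤ SB := by
      calc Real.sqrt t2 ≤ Real.sqrt (SB ^ 2) := Real.sqrt_le_sqrt hIH2
        _ = SB := Real.sqrt_sq hSBn
    have hRHS : (∑ T ∈ (insert i A).powerset, (a T) ^ 2) = SA + SB :=
      hsplit (fun T => (a T) ^ 2)
    rw [hRHS]
    have hρ4 : ρ ^ 4 ≤ 1 := by nlinarith
    have hEP : 0 ≤ E := by
      rw [hEdef]
      exact unifE_nonneg fun x => by positivity
    clear_value E t1 t2 SA SB
    clear hE havg hdecomp hsplit hinj hPinv hQinv hεinv hrw ih hEdef ht1 ht2 hSA hSB hinv hσ σ hRHS hQ hP Q P a hiA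
    have hm2 : E ≤ SA * SB :=
      le_trans hCS (mul_le_mul hs1 hs2 (Real.sqrt_nonneg t2) hSAn)
    have hm1 : 6 * ρ ^ 2 * E ≤ 2 * E := by nlinarith
    have hm3 : ρ ^ 4 * t2 ≤ t2 := by nlinarith
    nlinarith [hm1, hm2, hm3, hIH1, hIH2]
end
section
variable {d : ℕ}

set_option maxHeartbeats 4000000 in
lemma hyper_dual (h : (Fin d → Bool) → ℝ) (h0 : ∀ x, 0 ≤ h x) (h1 : ∀ x, h x ≤ 1) :
    (∑ T : Finset (Fin d), (3:ℝ)⁻¹ ^ T.card * (fhat d h T) ^ 2)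
      ≤ unifE d h * Real.sqrt (unifE d h) := by
  classical
  set μ := unifE d h with hμ
  set t := ∑ T : Finset (Fin d), (3:ℝ)⁻¹ ^ T.card * (fhat d h T) ^ 2 with ht
  set G : (Fin d → Bool) → ℝ :=
    fun x => ∑ T : Finset (Fin d), (3:ℝ)⁻¹ ^ T.card * fhat d h T * chi d T x with hG
  have hμ0 : 0 ≤ μ := unifE_nonneg h0
  have ht0 : 0 ≤ t := Finset.sum_nonneg fun T _ => by positivity
  -- Step A : E[h G] = t
  have hA : unifE d (fun x => h x * G x) = t := by
    have e : (fun x => h x * G x)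
        = fun x => ∑ T : Finset (Fin d),
          ((3:ℝ)⁻¹ ^ T.card * fhat d h T) * (h x * chi d T x) := by
      funext x
      rw [hG]
      simp only
      rw [Finset.mul_sum]
      exact Finset.sum_congr rfl fun T _ => by ring
    rw [e, unifE_sum]
    refine Finset.sum_congr rfl fun T _ => ?_
    rw [unifE_const_mul]
    have : unifE d (fun x => h x * chi d T x) = fhat d h T := rfl
    rw [this]
    ring
  -- Step B : E[G^4] ≤ t^2
  have hB : unifE d (fun x => G x ^ 4) ≤ t ^ 2 := by
    set ρ : ℝ := Real.sqrt 3⁻¹ with hρdef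
    have hρ2 : ρ ^ 2 = 3⁻¹ := Real.sq_sqrt (by norm_num)
    have key := hyper24 (d := d) ρ (Real.sqrt_nonneg _) (by rw [hρ2]; norm_num)
      Finset.univ (fun T => ρ ^ T.card * fhat d h T)
    rw [Finset.powerset_univ] at key
    have e1 : (fun x => (∑ T : Finset (Fin d),
        ρ ^ T.card * (ρ ^ T.card * fhat d h T) * chi d T x) ^ 4)
        = fun x => G x ^ 4 := by
      funext x
      congr 1
      refine Finset.sum_congr rfl fun T _ => ?_
      have : ρ ^ T.card * (ρ ^ T.card * fhat d h T) = (3:ℝ)⁻¹ ^ T.card * fhat d h T := by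
        rw [← mul_assoc, ← pow_add, ← two_mul, pow_mul, hρ2]
      rw [this]
    have e2 : (∑ T : Finset (Fin d), (ρ ^ T.card * fhat d h T) ^ 2) = t := by
      refine Finset.sum_congr rfl fun T _ => ?_
      rw [mul_pow, ← pow_mul, mul_comm T.card 2, pow_mul, hρ2]
    rw [e1, e2] at key
    exact key
  set c := unifE d (fun x => G x ^ 4) with hc
  have hc0 : 0 ≤ c := unifE_nonneg fun x => by positivity
  -- Step C : chain of Cauchy-Schwarz
  have hd1 : t ≤ unifE d (fun x => h x * |G x|) := by
    rw [← hA]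
    exact unifE_mono fun x => mul_le_mul_of_nonneg_left (le_abs_self _) (h0 x)
  have hw0 : 0 ≤ unifE d (fun x => h x * |G x|) :=
    unifE_nonneg fun x => mul_nonneg (h0 x) (abs_nonneg _)
  set w := unifE d (fun x => h x * |G x|) with hw
  have hCS1 : w ^ 2 ≤ unifE d (fun x => h x * Real.sqrt (h x))
      * unifE d (fun x => Real.sqrt (h x) * G x ^ 2) := by
    have := unifE_CS (fun x => Real.sqrt (h x * Real.sqrt (h x)))
      (fun x => Real.sqrt (Real.sqrt (h x) * G x ^ 2))
    have e1 : (fun x => Real.sqrt (h x * Real.sqrt (h x)) * Real.sqrt (Real.sqrt (h x) * G x ^ 2))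
        = fun x => h x * |G x| := by
      funext x
      rw [← Real.sqrt_mul (mul_nonneg (h0 x) (Real.sqrt_nonneg _))]
      have : h x * Real.sqrt (h x) * (Real.sqrt (h x) * G x ^ 2)
          = (h x * |G x|) ^ 2 := by
        have hs : Real.sqrt (h x) * Real.sqrt (h x) = h x := Real.mul_self_sqrt (h0 x)
        rw [mul_pow, sq_abs]
        linear_combination (h x * G x ^ 2) * hs
      rw [this, Real.sqrt_sq (mul_nonneg (h0 x) (abs_nonneg _))]
    have e2 : (fun x => Real.sqrt (h x * Real.sqrt (h x)) ^ 2)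
        = fun x => h x * Real.sqrt (h x) := by
      funext x
      exact Real.sq_sqrt (mul_nonneg (h0 x) (Real.sqrt_nonneg _))
    have e3 : (fun x => Real.sqrt (Real.sqrt (h x) * G x ^ 2) ^ 2)
        = fun x => Real.sqrt (h x) * G x ^ 2 := by
      funext x
      exact Real.sq_sqrt (mul_nonneg (Real.sqrt_nonneg _) (sq_nonneg _))
    rw [e1, e2, e3] at this
    exact this
  have he1 : unifE d (fun x => h x * Real.sqrt (h x)) ≤ μ := by
    refine unifE_mono fun x => ?_
    exact mul_le_of_le_one_right (h0 x) (Real.sqrt_le_one.mpr (h1 x))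
  have he1' : 0 ≤ unifE d (fun x => h x * Real.sqrt (h x)) :=
    unifE_nonneg fun x => mul_nonneg (h0 x) (Real.sqrt_nonneg _)
  have hCS2 : (unifE d (fun x => Real.sqrt (h x) * G x ^ 2)) ^ 2 ≤ μ * c := by
    have := unifE_CS (fun x => Real.sqrt (h x)) (fun x => G x ^ 2)
    have e2 : (fun x => Real.sqrt (h x) ^ 2) = fun x => h x := by
      funext x
      exact Real.sq_sqrt (h0 x)
    have e3 : (fun x => (G x ^ 2) ^ 2) = fun x => G x ^ 4 := by
      funext x
      ring
    rw [e2, e3] at this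
    exact this
  have he2' : 0 ≤ unifE d (fun x => Real.sqrt (h x) * G x ^ 2) :=
    unifE_nonneg fun x => mul_nonneg (Real.sqrt_nonneg _) (sq_nonneg _)
  -- assemble : w^2 ≤ μ * sqrt (μ c)
  have hsqc : unifE d (fun x => Real.sqrt (h x) * G x ^ 2) ≤ Real.sqrt (μ * c) := by
    nlinarith [Real.sq_sqrt (mul_nonneg hμ0 hc0), Real.sqrt_nonneg (μ * c)]
  have hw2 : w ^ 2 ≤ μ * Real.sqrt (μ * c) := by
    calc w ^ 2 ≤ unifE d (fun x => h x * Real.sqrt (h x))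
          * unifE d (fun x => Real.sqrt (h x) * G x ^ 2) := hCS1
      _ ≤ μ * Real.sqrt (μ * c) := by
          apply mul_le_mul he1 hsqc he2' hμ0
  have hcc : Real.sqrt (μ * c) ≤ Real.sqrt μ * t := by
    calc Real.sqrt (μ * c) ≤ Real.sqrt (μ * t ^ 2) := by
          apply Real.sqrt_le_sqrt
          exact mul_le_mul_of_nonneg_left hB hμ0
      _ = Real.sqrt μ * t := by
          rw [Real.sqrt_mul hμ0, Real.sqrt_sq ht0]
  have hfinal : t ^ 2 ≤ μ * Real.sqrt μ * t := by
    calc t ^ 2 ≤ w ^ 2 := by nlinarith [hd1, ht0, hw0]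
      _ ≤ μ * Real.sqrt (μ * c) := hw2
      _ ≤ μ * (Real.sqrt μ * t) := mul_le_mul_of_nonneg_left hcc hμ0
      _ = μ * Real.sqrt μ * t := by ring
  rcases eq_or_lt_of_le ht0 with heq | hlt
  · rw [← heq]
    positivity
  · nlinarith [hfinal, hlt]
end
section
variable {d : ℕ}

set_option maxHeartbeats 1000000 in
lemma local_bound (f : (Fin d → Bool) → ℝ) (i : Fin d)
    (h0 : ∀ x, 0 ≤ disc d f i x) (h1 : ∀ x, disc d f i x ≤ 1)
    (d0 : ℕ) (hd0 : 1 ≤ d0) :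
    (∑ S ∈ Finset.univ.filter (fun S : Finset (Fin d) => i ∈ S ∧ S.card ≤ d0),
        (fhat d f S) ^ 2)
      ≤ (3:ℝ) ^ (d0 - 1) / 4 *
        (unifE d (disc d f i) * Real.sqrt (unifE d (disc d f i))) := by
  classical
  set h : (Fin d → Bool) → ℝ := disc d f i with hh
  have step1 : (∑ S ∈ Finset.univ.filter (fun S : Finset (Fin d) => i ∈ S ∧ S.card ≤ d0),
      (fhat d f S) ^ 2)
      = ∑ T ∈ Finset.univ.filter (fun T : Finset (Fin d) => i ∉ T ∧ T.card ≤ d0 - 1),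
        (fhat d h T) ^ 2 / 4 := by
    refine Finset.sum_nbij' (i := fun S => S.erase i) (j := fun T => insert i T) ?_ ?_ ?_ ?_ ?_
    · intro S hS
      simp only [Finset.mem_filter, Finset.mem_univ, true_and] at *
      refine ⟨Finset.notMem_erase i S, ?_⟩
      rw [Finset.card_erase_of_mem hS.1]
      omega
    · intro T hT
      simp only [Finset.mem_filter, Finset.mem_univ, true_and] at *
      refine ⟨Finset.mem_insert_self i T, ?_⟩
      rw [Finset.card_insert_of_notMem hT.1]
      omega
    · intro S hS
      simp only [Finset.mem_filter, Finset.mem_univ, true_and] at hS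
      exact Finset.insert_erase hS.1
    · intro T hT
      simp only [Finset.mem_filter, Finset.mem_univ, true_and] at hT
      exact Finset.erase_insert hT.1
    · intro S hS
      simp only [Finset.mem_filter, Finset.mem_univ, true_and] at hS
      rw [hh, fhat_disc f i (S.erase i), if_neg (Finset.notMem_erase i S),
        Finset.insert_erase hS.1]
      ring
  rw [step1]
  have step2 : (∑ T ∈ Finset.univ.filter (fun T : Finset (Fin d) => i ∉ T ∧ T.card ≤ d0 - 1),
      (fhat d h T) ^ 2 / 4)
      ≤ (3:ℝ) ^ (d0 - 1) / 4 * ∑ T : Finset (Fin d), (3:ℝ)⁻¹ ^ T.card * (fhat d h T) ^ 2 := by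
    rw [Finset.mul_sum]
    calc (∑ T ∈ Finset.univ.filter (fun T : Finset (Fin d) => i ∉ T ∧ T.card ≤ d0 - 1),
        (fhat d h T) ^ 2 / 4)
        ≤ ∑ T ∈ Finset.univ.filter (fun T : Finset (Fin d) => i ∉ T ∧ T.card ≤ d0 - 1),
          (3:ℝ) ^ (d0 - 1) / 4 * ((3:ℝ)⁻¹ ^ T.card * (fhat d h T) ^ 2) := by
          refine Finset.sum_le_sum fun T hT => ?_
          simp only [Finset.mem_filter, Finset.mem_univ, true_and] at hT
          have hcard : T.card ≤ d0 - 1 := hT.2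
          have hpow : (1:ℝ) ≤ (3:ℝ) ^ (d0 - 1) * (3:ℝ)⁻¹ ^ T.card := by
            rw [inv_pow, ← div_eq_mul_inv, le_div_iff₀ (by positivity), one_mul]
            exact pow_le_pow_right₀ (by norm_num) hcard
          nlinarith [sq_nonneg (fhat d h T), hpow]
      _ ≤ ∑ T : Finset (Fin d), (3:ℝ) ^ (d0 - 1) / 4 * ((3:ℝ)⁻¹ ^ T.card * (fhat d h T) ^ 2) := by
          refine Finset.sum_le_sum_of_subset_of_nonneg (Finset.filter_subset _ _) ?_
          intro T _ _
          positivity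
  refine le_trans step2 ?_
  have hdual := hyper_dual h h0 h1
  have hpos : (0:ℝ) ≤ (3:ℝ) ^ (d0 - 1) / 4 := by positivity
  calc (3:ℝ) ^ (d0 - 1) / 4 * ∑ T : Finset (Fin d), (3:ℝ)⁻¹ ^ T.card * (fhat d h T) ^ 2
      ≤ (3:ℝ) ^ (d0 - 1) / 4 * (unifE d h * Real.sqrt (unifE d h)) :=
        mul_le_mul_of_nonneg_left hdual hpos
    _ = (3:ℝ) ^ (d0 - 1) / 4 * (unifE d (disc d f i) * Real.sqrt (unifE d (disc d f i))) := by
        rw [hh]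
end

set_option maxHeartbeats 2000000 in
theorem stmt19 (d : ℕ) (f : (Fin d → Bool) → ℝ) (K ε γ : ℝ)
    (hf : ∀ x, f x ∈ Set.Icc (0 : ℝ) 1) (hmono : BMono d f)
    (hK : 1 ≤ K) (hI : (∑ i : Fin d, unifE d (fun x => disc d f i x)) ≤ K)
    (hε : ε ∈ Set.Ioc (0 : ℝ) (1 / 2)) (hγ : 2 * Real.log 3 < γ)
    (d0 : ℕ) (hd0 : d0 = ⌈K / (2 * ε)⌉₊)
    (δ : ℝ) (hδ : δ = Real.exp (-γ * d0))
    (h1 : K / (4 * d0) ≤ ε / 2)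
    (h2 : (K / 12) * (3 * Real.exp (-γ / 2)) ^ d0 ≤ ε / 2)
    (J : Finset (Fin d))
    (hJ : J = Finset.univ.filter (fun i : Fin d => δ ≤ unifE d (fun x => disc d f i x)))
    (g : (Fin d → Bool) → ℝ)
    (hg : g = fun x => ∑ S ∈ Finset.univ.filter
        (fun S : Finset (Fin d) => S ⊆ J ∧ S.card ≤ d0), fhat d f S * chi d S x) :
    unifE d (fun x => (f x - g x) ^ 2) ≤ ε ∧
    (∀ x y : Fin d → Bool, (∀ i ∈ J, x i = y i) → g x = g y) ∧
    (J.card : ℝ) ≤ K * Real.exp (γ * d0) := by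
  classical
  obtain ⟨hε0, hεh⟩ := hε
  have hf0 : ∀ x, 0 ≤ f x := fun x => (hf x).1
  have hf1 : ∀ x, f x ≤ 1 := fun x => (hf x).2
  have hK0 : (0:ℝ) < K := lt_of_lt_of_le one_pos hK
  have hdisc0 : ∀ (i : Fin d) x, 0 ≤ disc d f i x := by
    intro i x
    unfold disc
    rw [sub_nonneg]
    apply hmono
    intro j
    by_cases hj : j = i
    · subst hj
      rw [Function.update_self, Function.update_self]
      exact Bool.false_le _
    · rw [Function.update_of_ne hj, Function.update_of_ne hj]
  have hdisc1 : ∀ (i : Fin d) x, disc d f i x ≤ 1 := by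
    intro i x
    unfold disc
    have h1' := hf1 (Function.update x i true)
    have h2' := hf0 (Function.update x i false)
    linarith
  set μ : Fin d → ℝ := fun i => unifE d (fun x => disc d f i x) with hμdef
  have hμ0 : ∀ i, 0 ≤ μ i := fun i => unifE_nonneg (fun x => hdisc0 i x)
  have hδ0 : (0:ℝ) < δ := hδ ▸ Real.exp_pos _
  have hd0pos : 1 ≤ d0 := by
    rw [hd0]
    exact Nat.ceil_pos.mpr (by positivity)
  -- part 3
  have hcardδ : (J.card : ℝ) * δ ≤ K := by
    have hin : ∀ i ∈ J, δ ≤ μ i := by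
      intro i hi
      rw [hJ] at hi
      exact (Finset.mem_filter.mp hi).2
    have e : (J.card : ℝ) * δ = ∑ _i ∈ J, δ := by
      rw [Finset.sum_const, nsmul_eq_mul]
    rw [e]
    calc ∑ i ∈ J, δ ≤ ∑ i ∈ J, μ i := Finset.sum_le_sum hin
      _ ≤ ∑ i, μ i := Finset.sum_le_sum_of_subset_of_nonneg (Finset.subset_univ J)
          (fun i _ _ => hμ0 i)
      _ ≤ K := hI
  have part3 : (J.card : ℝ) ≤ K * Real.exp (γ * d0) := by
    have hprod : δ * Real.exp (γ * d0) = 1 := by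
      rw [hδ, ← Real.exp_add, show -γ * (d0:ℝ) + γ * d0 = 0 by ring, Real.exp_zero]
    have he : (0:ℝ) < Real.exp (γ * d0) := Real.exp_pos _
    nlinarith [mul_le_mul_of_nonneg_right hcardδ he.le, hprod]
  -- part 2
  have part2 : ∀ x y : Fin d → Bool, (∀ i ∈ J, x i = y i) → g x = g y := by
    intro x y hxy
    rw [hg]
    refine Finset.sum_congr rfl fun S hS => ?_
    simp only [Finset.mem_filter, Finset.mem_univ, true_and] at hS
    congr 1
    unfold chi
    exact Finset.prod_congr rfl fun i hi => by rw [hxy i (hS.1 hi)]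
  -- part 1
  set F := fhat d f with hF
  set SS := Finset.univ.filter (fun S : Finset (Fin d) => S ⊆ J ∧ S.card ≤ d0) with hSS
  have hgS : ∀ S, fhat d g S = if S ∈ SS then F S else 0 := by
    intro S
    rw [hg]
    exact fhat_comb SS F S
  have hMain : unifE d (fun x => (f x - g x) ^ 2)
      = ∑ S ∈ Finset.univ.filter (fun S => S ∉ SS), F S ^ 2 := by
    rw [parseval_sq (fun x => f x - g x)]
    rw [Finset.sum_congr rfl fun S (_ : S ∈ univ) => by rw [fhat_sub f g S, hgS S]]
    rw [Finset.sum_congr rfl (g := fun S => if S ∉ SS then F S ^ 2 else 0)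
      (fun S _ => by by_cases hS : S ∈ SS <;> simp [hS, hF])]
    rw [← Finset.sum_filter]
  have hdeg : ∑ S : Finset (Fin d), (S.card : ℝ) * F S ^ 2 ≤ K / 4 := by
    rw [hF, degree_identity f]
    have hsq : ∀ i : Fin d, unifE d (fun x => (disc d f i x) ^ 2) ≤ μ i := by
      intro i
      apply unifE_mono
      intro x
      nlinarith [hdisc0 i x, hdisc1 i x]
    calc (1/4) * ∑ i, unifE d (fun x => (disc d f i x) ^ 2)
        ≤ (1/4) * ∑ i, μ i :=
          mul_le_mul_of_nonneg_left (Finset.sum_le_sum fun i _ => hsq i) (by norm_num)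
      _ ≤ K / 4 := by linarith [hI]
  -- A bound : high degree part
  have hA : ∑ S ∈ Finset.univ.filter (fun S : Finset (Fin d) => ¬ S.card ≤ d0), F S ^ 2
      ≤ ε / 2 := by
    have hd0R : (0:ℝ) < (d0:ℝ) := by exact_mod_cast hd0pos
    have hstep : ∀ S ∈ Finset.univ.filter (fun S : Finset (Fin d) => ¬ S.card ≤ d0),
        F S ^ 2 ≤ (S.card : ℝ) / d0 * F S ^ 2 := by
      intro S hS
      simp only [Finset.mem_filter, Finset.mem_univ, true_and, not_le] at hS
      have hc : (d0:ℝ) ≤ (S.card : ℝ) := by exact_mod_cast hS.le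
      have : (1:ℝ) ≤ (S.card : ℝ) / d0 := (one_le_div hd0R).mpr hc
      nlinarith [sq_nonneg (F S)]
    calc ∑ S ∈ Finset.univ.filter (fun S : Finset (Fin d) => ¬ S.card ≤ d0), F S ^ 2
        ≤ ∑ S ∈ Finset.univ.filter (fun S : Finset (Fin d) => ¬ S.card ≤ d0),
            (S.card : ℝ) / d0 * F S ^ 2 := Finset.sum_le_sum hstep
      _ = (1/(d0:ℝ)) * ∑ S ∈ Finset.univ.filter (fun S : Finset (Fin d) => ¬ S.card ≤ d0),
            (S.card : ℝ) * F S ^ 2 := by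
          rw [Finset.mul_sum]
          exact Finset.sum_congr rfl fun S _ => by ring
      _ ≤ (1/(d0:ℝ)) * ∑ S : Finset (Fin d), (S.card : ℝ) * F S ^ 2 := by
          apply mul_le_mul_of_nonneg_left ?_ (by positivity)
          apply Finset.sum_le_sum_of_subset_of_nonneg (Finset.filter_subset _ _)
          intro S _ _
          positivity
      _ ≤ (1/(d0:ℝ)) * (K/4) := mul_le_mul_of_nonneg_left hdeg (by positivity)
      _ = K / (4 * d0) := by ring
      _ ≤ ε / 2 := h1
  -- B bound : low degree, not inside J
  set JC := Finset.univ.filter (fun i : Fin d => i ∉ J) with hJC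
  have hμδ : ∀ i ∈ JC, μ i ≤ δ := by
    intro i hi
    rw [hJC, Finset.mem_filter] at hi
    have := hi.2
    rw [hJ, Finset.mem_filter] at this
    push_neg at this
    exact (this (Finset.mem_univ i)).le
  have hBmain : ∑ S ∈ Finset.univ.filter
      (fun S : Finset (Fin d) => ¬ S ⊆ J ∧ S.card ≤ d0), F S ^ 2 ≤ ε / 2 := by
    set MB := Finset.univ.filter (fun S : Finset (Fin d) => ¬ S ⊆ J ∧ S.card ≤ d0) with hMB
    have h1S : ∀ S ∈ MB, F S ^ 2 ≤ ∑ i ∈ JC, (if i ∈ S then F S ^ 2 else 0) := by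
      intro S hS
      rw [hMB, Finset.mem_filter] at hS
      obtain ⟨i, hiS, hiJ⟩ := Finset.not_subset.mp hS.2.1
      have hiJC : i ∈ JC := by
        rw [hJC, Finset.mem_filter]
        exact ⟨Finset.mem_univ i, hiJ⟩
      have := Finset.single_le_sum (f := fun j => if j ∈ S then F S ^ 2 else 0)
        (fun j _ => by by_cases hj : j ∈ S <;> simp [hj, sq_nonneg]) hiJC
      simpa [hiS] using this
    have h2S : ∀ i ∈ JC, (∑ S ∈ MB, if i ∈ S then F S ^ 2 else 0)
        ≤ (3:ℝ) ^ (d0 - 1) / 4 * (Real.sqrt δ * μ i) := by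
      intro i hiJC
      have hloc := local_bound f i (hdisc0 i) (hdisc1 i) d0 hd0pos
      have hsub : (∑ S ∈ MB, if i ∈ S then F S ^ 2 else 0)
          ≤ ∑ S ∈ Finset.univ.filter (fun S : Finset (Fin d) => i ∈ S ∧ S.card ≤ d0),
            F S ^ 2 := by
        rw [← Finset.sum_filter]
        apply Finset.sum_le_sum_of_subset_of_nonneg
        · intro S hSm
          rw [Finset.mem_filter] at hSm ⊢
          rw [hMB, Finset.mem_filter] at hSm
          exact ⟨Finset.mem_univ S, hSm.2, hSm.1.2.2⟩
        · intro S _ _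
          positivity
      have hμi : μ i * Real.sqrt (μ i) ≤ Real.sqrt δ * μ i := by
        have hs : Real.sqrt (μ i) ≤ Real.sqrt δ := Real.sqrt_le_sqrt (hμδ i hiJC)
        nlinarith [hμ0 i, Real.sqrt_nonneg (μ i)]
      calc (∑ S ∈ MB, if i ∈ S then F S ^ 2 else 0)
          ≤ ∑ S ∈ Finset.univ.filter (fun S : Finset (Fin d) => i ∈ S ∧ S.card ≤ d0),
              F S ^ 2 := hsub
        _ ≤ (3:ℝ) ^ (d0 - 1) / 4 * (μ i * Real.sqrt (μ i)) := by
            rw [hF]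
            exact hloc
        _ ≤ (3:ℝ) ^ (d0 - 1) / 4 * (Real.sqrt δ * μ i) :=
            mul_le_mul_of_nonneg_left hμi (by positivity)
    have hsumJC : ∑ i ∈ JC, μ i ≤ K :=
      le_trans (Finset.sum_le_sum_of_subset_of_nonneg (Finset.subset_univ JC)
        (fun i _ _ => hμ0 i)) hI
    have hsqrtδ : Real.sqrt δ = (Real.exp (-γ/2)) ^ d0 := by
      have h2' : ((Real.exp (-γ/2)) ^ d0) ^ 2 = Real.exp (-γ * d0) := by
        rw [← Real.exp_nat_mul, ← Real.exp_nat_mul]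
        congr 1
        push_cast
        ring
      rw [hδ, ← h2', Real.sqrt_sq (by positivity)]
    have hconst : (3:ℝ) ^ (d0 - 1) / 4 * Real.sqrt δ * K ≤ ε / 2 := by
      have e4 : (3:ℝ) ^ d0 = 3 * 3 ^ (d0 - 1) := by
        rw [← pow_succ']
        congr 1
        omega
      calc (3:ℝ) ^ (d0 - 1) / 4 * Real.sqrt δ * K
          = (K / 12) * ((3:ℝ) ^ d0 * Real.sqrt δ) := by rw [e4]; ring
        _ = (K / 12) * (3 * Real.exp (-γ/2)) ^ d0 := by
            rw [mul_pow, hsqrtδ]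
        _ ≤ ε / 2 := h2
    calc ∑ S ∈ MB, F S ^ 2
        ≤ ∑ S ∈ MB, ∑ i ∈ JC, (if i ∈ S then F S ^ 2 else 0) := Finset.sum_le_sum h1S
      _ = ∑ i ∈ JC, ∑ S ∈ MB, (if i ∈ S then F S ^ 2 else 0) := Finset.sum_comm
      _ ≤ ∑ i ∈ JC, (3:ℝ) ^ (d0 - 1) / 4 * (Real.sqrt δ * μ i) := Finset.sum_le_sum h2S
      _ = (3:ℝ) ^ (d0 - 1) / 4 * Real.sqrt δ * ∑ i ∈ JC, μ i := by
          rw [Finset.mul_sum]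
          exact Finset.sum_congr rfl fun i _ => by ring
      _ ≤ (3:ℝ) ^ (d0 - 1) / 4 * Real.sqrt δ * K := by
          apply mul_le_mul_of_nonneg_left hsumJC (by positivity)
      _ ≤ ε / 2 := hconst
  -- splitting
  have hsplit : ∑ S ∈ Finset.univ.filter (fun S => S ∉ SS), F S ^ 2
      ≤ (∑ S ∈ Finset.univ.filter (fun S : Finset (Fin d) => ¬ S.card ≤ d0), F S ^ 2)
        + ∑ S ∈ Finset.univ.filter
            (fun S : Finset (Fin d) => ¬ S ⊆ J ∧ S.card ≤ d0), F S ^ 2 := by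
    set N := Finset.univ.filter (fun S : Finset (Fin d) => S ∉ SS) with hN
    rw [← Finset.sum_filter_add_sum_filter_not N (fun S => S.card ≤ d0) (fun S => F S ^ 2)]
    have hY : ∑ S ∈ N.filter (fun S => ¬ S.card ≤ d0), F S ^ 2
        ≤ ∑ S ∈ Finset.univ.filter (fun S : Finset (Fin d) => ¬ S.card ≤ d0), F S ^ 2 := by
      apply Finset.sum_le_sum_of_subset_of_nonneg
      · intro S hSm
        rw [Finset.mem_filter] at hSm ⊢
        exact ⟨Finset.mem_univ S, hSm.2⟩
      · intro S _ _
        positivity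
    have hX : ∑ S ∈ N.filter (fun S => S.card ≤ d0), F S ^ 2
        ≤ ∑ S ∈ Finset.univ.filter
            (fun S : Finset (Fin d) => ¬ S ⊆ J ∧ S.card ≤ d0), F S ^ 2 := by
      apply Finset.sum_le_sum_of_subset_of_nonneg
      · intro S hSm
        rw [Finset.mem_filter] at hSm ⊢
        have hSN := hSm.1
        rw [hN, Finset.mem_filter] at hSN
        have hnot : ¬ (S ⊆ J ∧ S.card ≤ d0) := by
          intro hcon
          exact hSN.2 (by rw [hSS, Finset.mem_filter]; exact ⟨Finset.mem_univ S, hcon⟩)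
        refine ⟨Finset.mem_univ S, ?_, hSm.2⟩
        intro hsubJ
        exact hnot ⟨hsubJ, hSm.2⟩
      · intro S _ _
        positivity
    linarith
  refine ⟨?_, part2, part3⟩
  rw [hMain]
  calc ∑ S ∈ Finset.univ.filter (fun S => S ∉ SS), F S ^ 2
      ≤ (∑ S ∈ Finset.univ.filter (fun S : Finset (Fin d) => ¬ S.card ≤ d0), F S ^ 2)
        + ∑ S ∈ Finset.univ.filter
            (fun S : Finset (Fin d) => ¬ S ⊆ J ∧ S.card ≤ d0), F S ^ 2 := hsplit
    _ ≤ ε / 2 + ε / 2 := add_le_add hA hBmain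
    _ = ε := by ring
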